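/- Let n ≥ 1, let 1 ≤ p ≤ ∞ and 1 ≤ q ≤ ∞, let α, β > -1 and let a, b, c be real numbers. If T_{a,b,c} is bounded from L^p_α to L^q_β (with L^∞ in place of L^p_α when p = ∞, and in place of L^q_β when q = ∞), then b > -1. -/

import Mathlib

open MeasureTheory Complex
open scoped ENNReal

noncomputable section

/-- `ℂ^n` with the Euclidean (Hermitian) structure. -/
abbrev Cn (n : ℕ) := EuclideanSpace ℂ (Fin n)

instance (n : ℕ) : MeasurableSpace (Cn n) := WithLp.measurableSpace 2 (Fin n → ℂ)
instance (n : ℕ) : BorelSpace (Cn n) := PiLp.borelSpace 2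

/-- The open unit ball `B_n` of `ℂ^n`. -/
def unitBall (n : ℕ) : Set (Cn n) := Metric.ball 0 1

/-- Lebesgue volume measure on `B_n`, normalized so that `v(B_n) = 1`. -/
def vol (n : ℕ) : Measure (Cn n) :=
  (volume (unitBall n))⁻¹ • volume.restrict (unitBall n)

/-- The weighted measure `dv_γ = c_γ (1-|z|²)^γ dv`, with
`c_γ = Γ(n+γ+1)/(n! Γ(γ+1))`. -/
def wvol (n : ℕ) (γ : ℝ) : Measure (Cn n) :=
  (vol n).withDensity fun z =>
    ENNReal.ofReal
      ((Real.Gamma ((n : ℝ) + γ + 1) / ((n.factorial : ℝ) * Real.Gamma (γ + 1))) *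
        (1 - ‖z‖ ^ 2) ^ γ)

/-- The Hermitian pairing `⟨z,w⟩ = ∑ z_j conj(w_j)`. -/
def herm {n : ℕ} (z w : Cn n) : ℂ := ∑ j, z j * (starRingEnd ℂ) (w j)

/-- Kernel of the Forelli–Rudin type operator `T_{a,b,c}`:
`(1-|z|²)^a (1-|w|²)^b (1-⟨z,w⟩)^{-c}` (principal branch power). -/
def Tker (n : ℕ) (a b c : ℝ) (z w : Cn n) : ℂ :=
  (((1 - ‖z‖ ^ 2) ^ a * (1 - ‖w‖ ^ 2) ^ b : ℝ) : ℂ) * (1 - herm z w) ^ (-(c : ℂ))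

/-- Kernel of the Forelli–Rudin type operator `S_{a,b,c}`:
`(1-|z|²)^a (1-|w|²)^b |1-⟨z,w⟩|^{-c}`. -/
def Sker (n : ℕ) (a b c : ℝ) (z w : Cn n) : ℂ :=
  (((1 - ‖z‖ ^ 2) ^ a * (1 - ‖w‖ ^ 2) ^ b * (‖1 - herm z w‖) ^ (-c) : ℝ) : ℂ)

/-- The integral operator with kernel `K` (integration in `w` with respect to `ρ`)
is bounded from `L^p(μ)` to `L^q(ν)`: there is `C ≥ 0` such that for every
`f ∈ L^p(μ)` the defining integral converges absolutely for a.e. `z` and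
`‖A f‖_{L^q(ν)} ≤ C ‖f‖_{L^p(μ)}`. -/
def IsBddOp (n : ℕ) (K : Cn n → Cn n → ℂ) (ρ : Measure (Cn n))
    (p q : ℝ≥0∞) (μ ν : Measure (Cn n)) : Prop :=
  ∃ C : ℝ, 0 ≤ C ∧ ∀ f : Cn n → ℂ, MemLp f p μ →
    (∀ᵐ z ∂(vol n), Integrable (fun w => K z w * f w) ρ) ∧
    eLpNorm (fun z => ∫ w, K z w * f w ∂ρ) q ν ≤ ENNReal.ofReal C * eLpNorm f p μ

/-! ### Auxiliary lemmas -/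

open Set Module

section Aux

/-- One-dimensional model integral: `∫_0^1 (1-r)^γ dr` is finite iff `γ > -1`. -/
lemma oneDim_aux (γ : ℝ) :
    (∫⁻ r in Ioo (0:ℝ) 1, ENNReal.ofReal ((1 - r) ^ γ)) ≠ ∞ ↔ -1 < γ := by
  have hmp : MeasurePreserving (fun x : ℝ => 1 - x) volume volume :=
    Measure.measurePreserving_sub_left volume 1
  have hpre : (fun x : ℝ => 1 - x) ⁻¹' (Ioo (0:ℝ) 1) = Ioo (0:ℝ) 1 := by
    ext x
    simp only [mem_preimage, mem_Ioo]
    constructor <;> intro h <;> constructor <;> linarith [h.1, h.2]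
  have hm0 : Measurable (fun y : ℝ => y ^ γ) := by fun_prop
  have key : (∫⁻ r in Ioo (0:ℝ) 1, ENNReal.ofReal ((1 - r) ^ γ))
      = ∫⁻ y in Ioo (0:ℝ) 1, ENNReal.ofReal (y ^ γ) := by
    have := hmp.setLIntegral_comp_preimage (s := Ioo (0:ℝ) 1) measurableSet_Ioo
      (f := fun y => ENNReal.ofReal (y ^ γ)) hm0.ennreal_ofReal
    rw [hpre] at this
    exact this
  rw [key, lintegral_ofReal_ne_top_iff_integrable hm0.aestronglyMeasurable
    ((ae_restrict_mem measurableSet_Ioo).mono fun x hx => Real.rpow_nonneg hx.1.le γ)]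
  exact intervalIntegral.integrableOn_Ioo_rpow_iff zero_lt_one

/-- One-dimensional divergence: `∫_{1/2}^1 (1-r)⁻¹ dr = ∞`. -/
lemma oneDim_inf : (∫⁻ r in Ioo (1/2:ℝ) 1, ENNReal.ofReal ((1 - r)⁻¹)) = ∞ := by
  have hmp : MeasurePreserving (fun x : ℝ => 1 - x) volume volume :=
    Measure.measurePreserving_sub_left volume 1
  have hpre : (fun x : ℝ => 1 - x) ⁻¹' (Ioo (0:ℝ) (1/2)) = Ioo (1/2:ℝ) 1 := by
    ext x
    simp only [mem_preimage, mem_Ioo]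
    constructor <;> intro h <;> constructor <;> linarith [h.1, h.2]
  have hm0 : Measurable (fun y : ℝ => y⁻¹) := by fun_prop
  have key : (∫⁻ r in Ioo (1/2:ℝ) 1, ENNReal.ofReal ((1 - r)⁻¹))
      = ∫⁻ y in Ioo (0:ℝ) (1/2), ENNReal.ofReal y⁻¹ := by
    have := hmp.setLIntegral_comp_preimage (s := Ioo (0:ℝ) (1/2)) measurableSet_Ioo
      (f := fun y => ENNReal.ofReal y⁻¹) hm0.ennreal_ofReal
    rw [hpre] at this
    exact this
  rw [key]
  by_contra h
  have hInt : Integrable (fun y : ℝ => y⁻¹) (volume.restrict (Ioo (0:ℝ) (1/2))) :=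
    (lintegral_ofReal_ne_top_iff_integrable hm0.aestronglyMeasurable
      ((ae_restrict_mem measurableSet_Ioo).mono fun x hx => inv_nonneg.2 hx.1.le)).1 h
  have hInt' : IntegrableOn (fun y : ℝ => y ^ (-1:ℝ)) (Ioo (0:ℝ) (1/2)) volume := by
    refine hInt.congr ?_
    filter_upwards [ae_restrict_mem measurableSet_Ioo] with x hx
    rw [Real.rpow_neg_one]
  have := (intervalIntegral.integrableOn_Ioo_rpow_iff (by norm_num : (0:ℝ) < 1/2)).1 hInt'
  linarith

/-- Polar-coordinate formula for the Lebesgue integral of a radial function. -/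
lemma lintegral_norm_polar {E : Type*} [NormedAddCommGroup E] [NormedSpace ℝ E]
    [MeasurableSpace E] [BorelSpace E] [FiniteDimensional ℝ E] [Nontrivial E]
    (μ : Measure E) [μ.IsAddHaarMeasure] (f : ℝ → ℝ≥0∞) (hf : Measurable f) :
    ∫⁻ x, f ‖x‖ ∂μ = μ.toSphere Set.univ *
      ∫⁻ r in Set.Ioi (0:ℝ), ENNReal.ofReal (r ^ (finrank ℝ E - 1)) * f r := by
  have hmeas2 : Measurable (fun p : Metric.sphere (0:E) 1 × Ioi (0:ℝ) => f p.2) := by fun_prop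
  calc
    ∫⁻ x, f ‖x‖ ∂μ = ∫⁻ x in ({(0:E)}ᶜ : Set E), f ‖x‖ ∂μ := by
      rw [restrict_compl_singleton]
    _ = ∫⁻ x : ({(0:E)}ᶜ : Set E), f ‖(x : E)‖ ∂(Measure.comap Subtype.val μ) :=
      (lintegral_subtype_comap (measurableSet_singleton _).compl fun x => f ‖x‖).symm
    _ = ∫⁻ x : ({(0:E)}ᶜ : Set E),
          (fun p : Metric.sphere (0:E) 1 × Ioi (0:ℝ) => f p.2) (homeomorphUnitSphereProd E x)
          ∂(Measure.comap Subtype.val μ) := by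
      refine lintegral_congr fun x => ?_
      simp
    _ = ∫⁻ p : (Metric.sphere (0:E) 1 × Ioi (0:ℝ)), f p.2
        ∂(μ.toSphere.prod (.volumeIoiPow (finrank ℝ E - 1))) :=
      μ.measurePreserving_homeomorphUnitSphereProd.lintegral_comp hmeas2
    _ = μ.toSphere Set.univ * ∫⁻ r : Ioi (0:ℝ), f r ∂(Measure.volumeIoiPow (finrank ℝ E - 1)) := by
      rw [lintegral_prod _ hmeas2.aemeasurable]
      simp [lintegral_const, mul_comm]
    _ = μ.toSphere Set.univ * ∫⁻ r : Ioi (0:ℝ),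
          ENNReal.ofReal ((r:ℝ) ^ (finrank ℝ E - 1)) * f r ∂(Measure.comap Subtype.val volume) := by
      rw [Measure.volumeIoiPow, lintegral_withDensity_eq_lintegral_mul _
        (by fun_prop) (by fun_prop)]
      simp [Pi.mul_apply]
    _ = _ := by
      rw [lintegral_subtype_comap measurableSet_Ioi
        (fun r : ℝ => ENNReal.ofReal (r ^ (finrank ℝ E - 1)) * f r)]

/-- Reduction of the integral of a radial function over the unit ball to `(0,1)`. -/
lemma lintegral_ball_radial (n : ℕ) (hn : 1 ≤ n) (g : ℝ → ℝ≥0∞) (hg : Measurable g) :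
    ∫⁻ x in Metric.ball (0 : Cn n) 1, g ‖x‖ ∂volume
      = (volume : Measure (Cn n)).toSphere Set.univ *
        ∫⁻ r in Ioo (0:ℝ) 1, ENNReal.ofReal (r ^ (finrank ℝ (Cn n) - 1)) * g r := by
  haveI : Nonempty (Fin n) := ⟨⟨0, hn⟩⟩
  haveI : Nontrivial (Cn n) := inferInstance
  have h1 : ∫⁻ x in Metric.ball (0 : Cn n) 1, g ‖x‖ ∂volume
      = ∫⁻ x, (Iio (1:ℝ)).indicator g ‖x‖ ∂(volume : Measure (Cn n)) := by
    rw [show (fun x : Cn n => (Iio (1:ℝ)).indicator g ‖x‖)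
        = (Metric.ball (0 : Cn n) 1).indicator (fun x => g ‖x‖) from ?_,
      lintegral_indicator Metric.isOpen_ball.measurableSet]
    funext x
    by_cases hx : ‖x‖ < 1
    · rw [Set.indicator_of_mem (Set.mem_Iio.2 hx), Set.indicator_of_mem (by
        simpa [Metric.mem_ball, dist_zero_right] using hx)]
    · rw [Set.indicator_of_notMem (fun h => hx (Set.mem_Iio.1 h)),
        Set.indicator_of_notMem (by simpa [Metric.mem_ball, dist_zero_right] using hx)]
  rw [h1, lintegral_norm_polar volume _ (hg.indicator measurableSet_Iio)]
  congr 1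
  have h2 : ∀ r : ℝ, ENNReal.ofReal (r ^ (finrank ℝ (Cn n) - 1)) * (Iio (1:ℝ)).indicator g r
      = (Iio (1:ℝ)).indicator (fun r => ENNReal.ofReal (r ^ (finrank ℝ (Cn n) - 1)) * g r) r := by
    intro r
    by_cases hr : r ∈ Iio (1:ℝ)
    · rw [Set.indicator_of_mem hr, Set.indicator_of_mem hr]
    · rw [Set.indicator_of_notMem hr, Set.indicator_of_notMem hr, mul_zero]
  calc
    ∫⁻ r in Ioi (0:ℝ), ENNReal.ofReal (r ^ (finrank ℝ (Cn n) - 1)) * (Iio (1:ℝ)).indicator g r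
        = ∫⁻ r in Ioi (0:ℝ), (Iio (1:ℝ)).indicator
            (fun r => ENNReal.ofReal (r ^ (finrank ℝ (Cn n) - 1)) * g r) r :=
          lintegral_congr fun r => h2 r
    _ = ∫⁻ r in Iio (1:ℝ) ∩ Ioi (0:ℝ), ENNReal.ofReal (r ^ (finrank ℝ (Cn n) - 1)) * g r := by
          rw [lintegral_indicator measurableSet_Iio, Measure.restrict_restrict measurableSet_Iio]
    _ = _ := by
          rw [show Iio (1:ℝ) ∩ Ioi (0:ℝ) = Ioo (0:ℝ) 1 from by
            ext x; simp [mem_Ioo, and_comm]]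

lemma toSphere_univ_ne_zero (n : ℕ) (hn : 1 ≤ n) :
    (volume : Measure (Cn n)).toSphere Set.univ ≠ 0 := by
  haveI : Nonempty (Fin n) := ⟨⟨0, hn⟩⟩
  haveI : Nontrivial (Cn n) := inferInstance
  rw [Measure.toSphere_apply_univ]
  refine mul_ne_zero ?_ (Metric.measure_ball_pos volume 0 one_pos).ne'
  simp [Module.finrank_pos.ne']

lemma toSphere_univ_ne_top (n : ℕ) (hn : 1 ≤ n) :
    (volume : Measure (Cn n)).toSphere Set.univ ≠ ∞ := by
  haveI : Nonempty (Fin n) := ⟨⟨0, hn⟩⟩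
  haveI : Nontrivial (Cn n) := inferInstance
  exact measure_ne_top _ _

/-- Finiteness of the weight integral for `γ > -1`. -/
lemma lintegral_weight_ne_top (n : ℕ) (hn : 1 ≤ n) (γ : ℝ) (hγ : -1 < γ) :
    ∫⁻ x in Metric.ball (0 : Cn n) 1, ENNReal.ofReal ((1 - ‖x‖ ^ 2) ^ γ) ∂volume ≠ ∞ := by
  have hg : Measurable (fun r : ℝ => ENNReal.ofReal ((1 - r ^ 2) ^ γ)) := by fun_prop
  rw [lintegral_ball_radial n hn _ hg]
  refine ENNReal.mul_ne_top (toSphere_univ_ne_top n hn) ?_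
  set K : ℝ := max ((2:ℝ) ^ γ) 1 with hK
  have hK0 : 0 ≤ K := le_trans zero_le_one (le_max_right _ _)
  have hbound : ∀ r ∈ Ioo (0:ℝ) 1,
      ENNReal.ofReal (r ^ (finrank ℝ (Cn n) - 1)) * ENNReal.ofReal ((1 - r ^ 2) ^ γ)
        ≤ ENNReal.ofReal K * ENNReal.ofReal ((1 - r) ^ γ) := by
    intro r hr
    obtain ⟨hr0, hr1⟩ := hr
    have h1r : 0 < 1 - r := by linarith
    have h1r2 : 0 < 1 - r ^ 2 := by nlinarith
    have e1 : ENNReal.ofReal (r ^ (finrank ℝ (Cn n) - 1)) ≤ 1 := by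
      rw [show (1 : ℝ≥0∞) = ENNReal.ofReal 1 from (ENNReal.ofReal_one).symm]
      exact ENNReal.ofReal_le_ofReal (pow_le_one₀ hr0.le hr1.le)
    have e2 : (1 - r ^ 2) ^ γ ≤ K * (1 - r) ^ γ := by
      have hfac : (1 - r ^ 2) = (1 - r) * (1 + r) := by ring
      rw [hfac, Real.mul_rpow h1r.le (by linarith), mul_comm K]
      refine mul_le_mul_of_nonneg_left ?_ (Real.rpow_nonneg h1r.le γ)
      rcases le_or_gt 0 γ with h | h
      · exact le_trans (Real.rpow_le_rpow (by linarith) (by linarith) h) (le_max_left _ _)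
      · refine le_trans ?_ (le_max_right _ _)
        calc (1 + r) ^ γ ≤ (1:ℝ) ^ γ :=
              Real.rpow_le_rpow_of_nonpos one_pos (by linarith) h.le
          _ = 1 := Real.one_rpow γ
    calc ENNReal.ofReal (r ^ (finrank ℝ (Cn n) - 1)) * ENNReal.ofReal ((1 - r ^ 2) ^ γ)
        ≤ 1 * ENNReal.ofReal ((1 - r ^ 2) ^ γ) := mul_le_mul_left e1 _
      _ = ENNReal.ofReal ((1 - r ^ 2) ^ γ) := one_mul _
      _ ≤ ENNReal.ofReal (K * (1 - r) ^ γ) := ENNReal.ofReal_le_ofReal e2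
      _ = ENNReal.ofReal K * ENNReal.ofReal ((1 - r) ^ γ) := ENNReal.ofReal_mul hK0
  have hle : (∫⁻ r in Ioo (0:ℝ) 1,
      ENNReal.ofReal (r ^ (finrank ℝ (Cn n) - 1)) * ENNReal.ofReal ((1 - r ^ 2) ^ γ))
      ≤ ∫⁻ r in Ioo (0:ℝ) 1, ENNReal.ofReal K * ENNReal.ofReal ((1 - r) ^ γ) := by
    refine lintegral_mono_ae ?_
    filter_upwards [ae_restrict_mem measurableSet_Ioo] with r hr using hbound r hr
  refine ne_top_of_le_ne_top ?_ hle
  rw [lintegral_const_mul' _ _ ENNReal.ofReal_ne_top]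
  exact ENNReal.mul_ne_top ENNReal.ofReal_ne_top ((oneDim_aux γ).2 hγ)

/-- Divergence of the weight integral for `γ ≤ -1`. -/
lemma lintegral_weight_eq_top (n : ℕ) (hn : 1 ≤ n) (γ : ℝ) (hγ : γ ≤ -1) :
    ∫⁻ x in Metric.ball (0 : Cn n) 1, ENNReal.ofReal ((1 - ‖x‖ ^ 2) ^ γ) ∂volume = ∞ := by
  have hg : Measurable (fun r : ℝ => ENNReal.ofReal ((1 - r ^ 2) ^ γ)) := by fun_prop
  rw [lintegral_ball_radial n hn _ hg, ENNReal.mul_eq_top]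
  left
  refine ⟨toSphere_univ_ne_zero n hn, ?_⟩
  set d := finrank ℝ (Cn n) - 1 with hd
  set κ : ℝ := (1/2:ℝ) ^ d with hκ
  have hκ0 : 0 < κ := pow_pos (by norm_num) d
  have hge : ∀ r ∈ Ioo (1/2:ℝ) 1,
      ENNReal.ofReal (κ / 2) * ENNReal.ofReal ((1 - r)⁻¹)
        ≤ ENNReal.ofReal (r ^ d) * ENNReal.ofReal ((1 - r ^ 2) ^ γ) := by
    intro r hr
    obtain ⟨hr0, hr1⟩ := hr
    have h1r : 0 < 1 - r := by linarith
    have h1r2 : 0 < 1 - r ^ 2 := by nlinarith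
    have e1 : κ ≤ r ^ d := pow_le_pow_left₀ (by norm_num) hr0.le d
    have e2 : (1 - r)⁻¹ / 2 ≤ (1 - r ^ 2) ^ γ := by
      have step1 : (1 - r ^ 2) ^ (-1:ℝ) ≤ (1 - r ^ 2) ^ γ :=
        Real.rpow_le_rpow_of_exponent_ge h1r2 (by nlinarith) hγ
      have step2 : (1 - r)⁻¹ / 2 ≤ (1 - r ^ 2)⁻¹ := by
        have h2 : 1 - r ^ 2 ≤ 2 * (1 - r) := by nlinarith
        have h3 := one_div_le_one_div_of_le h1r2 h2
        rw [one_div, one_div] at h3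
        calc (1 - r)⁻¹ / 2 = (2 * (1 - r))⁻¹ := by rw [mul_inv]; ring
          _ ≤ (1 - r ^ 2)⁻¹ := h3
      rw [Real.rpow_neg_one] at step1
      linarith
    have hreal : κ / 2 * (1 - r)⁻¹ ≤ r ^ d * (1 - r ^ 2) ^ γ := by
      have h1 : κ / 2 * (1 - r)⁻¹ = κ * ((1 - r)⁻¹ / 2) := by ring
      rw [h1]
      calc κ * ((1 - r)⁻¹ / 2) ≤ κ * ((1 - r ^ 2) ^ γ) :=
            mul_le_mul_of_nonneg_left e2 hκ0.le
        _ ≤ r ^ d * (1 - r ^ 2) ^ γ :=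
            mul_le_mul_of_nonneg_right e1 (Real.rpow_nonneg h1r2.le γ)
    calc ENNReal.ofReal (κ / 2) * ENNReal.ofReal ((1 - r)⁻¹)
        = ENNReal.ofReal (κ / 2 * (1 - r)⁻¹) := (ENNReal.ofReal_mul (by positivity)).symm
      _ ≤ ENNReal.ofReal (r ^ d * (1 - r ^ 2) ^ γ) := ENNReal.ofReal_le_ofReal hreal
      _ = ENNReal.ofReal (r ^ d) * ENNReal.ofReal ((1 - r ^ 2) ^ γ) :=
          ENNReal.ofReal_mul (by positivity)
  have big : (⊤:ℝ≥0∞) ≤ ∫⁻ r in Ioo (1/2:ℝ) 1,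
      ENNReal.ofReal (r ^ d) * ENNReal.ofReal ((1 - r ^ 2) ^ γ) := by
    calc (⊤:ℝ≥0∞) = ENNReal.ofReal (κ / 2) * ∫⁻ r in Ioo (1/2:ℝ) 1,
          ENNReal.ofReal ((1 - r)⁻¹) := by
          rw [oneDim_inf, ENNReal.mul_top (ENNReal.ofReal_pos.2 (by positivity)).ne']
      _ = ∫⁻ r in Ioo (1/2:ℝ) 1, ENNReal.ofReal (κ / 2) * ENNReal.ofReal ((1 - r)⁻¹) :=
          (lintegral_const_mul' _ _ ENNReal.ofReal_ne_top).symm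
      _ ≤ _ := by
          refine lintegral_mono_ae ?_
          filter_upwards [ae_restrict_mem measurableSet_Ioo] with r hr using hge r hr
  have hsub : (∫⁻ r in Ioo (1/2:ℝ) 1, ENNReal.ofReal (r ^ d) * ENNReal.ofReal ((1 - r ^ 2) ^ γ))
      ≤ ∫⁻ r in Ioo (0:ℝ) 1, ENNReal.ofReal (r ^ d) * ENNReal.ofReal ((1 - r ^ 2) ^ γ) :=
    lintegral_mono' (Measure.restrict_mono (Ioo_subset_Ioo (by norm_num) le_rfl) le_rfl) le_rfl
  exact top_le_iff.1 (le_trans big hsub)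

end Aux

/-- if `T_{a,b,c}` is bounded from `L^p_α` to `L^q_β` for some
`1 ≤ p, q ≤ ∞`, then `b > -1`. -/
theorem stmt13 (n : ℕ) (hn : 1 ≤ n) (p q : ℝ≥0∞) (α β a b c : ℝ)
    (hp : 1 ≤ p) (hq : 1 ≤ q) (hα : -1 < α) (hβ : -1 < β)
    (hT : IsBddOp n (Tker n a b c) (vol n) p q
      (if p = ⊤ then vol n else wvol n α) (if q = ⊤ then vol n else wvol n β)) :
    -1 < b := by
  by_contra hb
  push_neg at hb
  haveI : Nonempty (Fin n) := ⟨⟨0, hn⟩⟩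
  have hBeq : unitBall n = Metric.ball (0 : Cn n) 1 := rfl
  have hBmeas : MeasurableSet (unitBall n) := Metric.isOpen_ball.measurableSet
  have hB0 : volume (unitBall n) ≠ 0 := (Metric.measure_ball_pos volume 0 one_pos).ne'
  have hBtop : volume (unitBall n) ≠ ∞ := measure_ball_lt_top.ne
  have hc0 : (volume (unitBall n))⁻¹ ≠ 0 := ENNReal.inv_ne_zero.2 hBtop
  have hctop : (volume (unitBall n))⁻¹ ≠ ∞ := ENNReal.inv_ne_top.2 hB0
  haveI hVfin : IsFiniteMeasure (vol n) := by
    constructor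
    rw [vol, Measure.smul_apply, smul_eq_mul, Measure.restrict_apply_univ]
    exact ENNReal.mul_lt_top hctop.lt_top hBtop.lt_top
  set cα : ℝ := Real.Gamma ((n : ℝ) + α + 1) / ((n.factorial : ℝ) * Real.Gamma (α + 1)) with hcα
  have hcα0 : 0 ≤ cα := by
    refine div_nonneg (Real.Gamma_pos_of_pos (by push_cast; linarith [Nat.cast_nonneg (α := ℝ) n])).le
      (mul_nonneg (Nat.cast_nonneg _) (Real.Gamma_pos_of_pos (by linarith)).le)
  haveI hWfin : IsFiniteMeasure (wvol n α) := by
    constructor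
    rw [wvol, withDensity_apply _ MeasurableSet.univ, Measure.restrict_univ, vol,
      lintegral_smul_measure]
    have hpt : ∀ z : Cn n, ENNReal.ofReal (cα * (1 - ‖z‖ ^ 2) ^ α)
        = ENNReal.ofReal cα * ENNReal.ofReal ((1 - ‖z‖ ^ 2) ^ α) :=
      fun z => ENNReal.ofReal_mul hcα0
    calc (volume (unitBall n))⁻¹ *
          ∫⁻ z, ENNReal.ofReal (cα * (1 - ‖z‖ ^ 2) ^ α) ∂(volume.restrict (unitBall n))
        = (volume (unitBall n))⁻¹ * (ENNReal.ofReal cα *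
            ∫⁻ z in unitBall n, ENNReal.ofReal ((1 - ‖z‖ ^ 2) ^ α) ∂volume) := by
          rw [show (fun z : Cn n => ENNReal.ofReal (cα * (1 - ‖z‖ ^ 2) ^ α))
              = fun z : Cn n => ENNReal.ofReal cα * ENNReal.ofReal ((1 - ‖z‖ ^ 2) ^ α) from
            funext hpt, lintegral_const_mul' _ _ ENNReal.ofReal_ne_top]
      _ < ⊤ := by
          refine ENNReal.mul_lt_top hctop.lt_top (ENNReal.mul_lt_top ENNReal.ofReal_lt_top ?_)
          rw [hBeq]
          exact (lintegral_weight_ne_top n hn α hα).lt_top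
  obtain ⟨C, hC0, hC⟩ := hT
  have hmem : MemLp (fun _ : Cn n => (1:ℂ)) p (if p = ⊤ then vol n else wvol n α) := by
    split_ifs with hptop
    · subst hptop; exact memLp_top_const 1
    · exact memLp_const 1
  obtain ⟨hInt, -⟩ := hC _ hmem
  rw [vol, Measure.ae_ennreal_smul_measure_iff hc0] at hInt
  haveI : (ae (volume.restrict (unitBall n))).NeBot :=
    ae_neBot.2 (by rw [Ne, Measure.restrict_eq_zero]; exact hB0)
  obtain ⟨z, hzI, hzB⟩ := (hInt.and (ae_restrict_mem hBmeas)).exists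
  simp only [mul_one] at hzI
  rw [integrable_smul_measure hc0 hctop] at hzI
  have hz1 : ‖z‖ < 1 := by rwa [hBeq, mem_ball_zero_iff] at hzB
  have hz0 : (0:ℝ) ≤ ‖z‖ := norm_nonneg z
  have hz2 : 0 < 1 - ‖z‖ := by linarith
  have hz2' : 0 < 1 - ‖z‖ ^ 2 := by nlinarith
  set m : ℝ := min ((1 - ‖z‖) ^ (-c)) ((2:ℝ) ^ (-c)) with hm
  have hmpos : 0 < m := lt_min (Real.rpow_pos_of_pos hz2 _) (Real.rpow_pos_of_pos two_pos _)
  set ε : ℝ := (1 - ‖z‖ ^ 2) ^ a * m with hε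
  have hεpos : 0 < ε := mul_pos (Real.rpow_pos_of_pos hz2' a) hmpos
  have hlow : ∀ w ∈ unitBall n,
      ENNReal.ofReal (ε * (1 - ‖w‖ ^ 2) ^ b) ≤ ENNReal.ofReal ‖Tker n a b c z w‖ := by
    intro w hw
    have hw1 : ‖w‖ < 1 := by rwa [hBeq, mem_ball_zero_iff] at hw
    have hw0 : (0:ℝ) ≤ ‖w‖ := norm_nonneg w
    have hw2' : 0 < 1 - ‖w‖ ^ 2 := by nlinarith
    have hherm : ‖herm z w‖ ≤ ‖z‖ * ‖w‖ := by
      have heq : herm z w = (inner ℂ w z : ℂ) := by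
        simp [herm, PiLp.inner_apply, RCLike.inner_apply, mul_comm]
      rw [heq]
      exact (norm_inner_le_norm w z).trans_eq (mul_comm ‖w‖ ‖z‖)
    have hhz : ‖herm z w‖ ≤ ‖z‖ := le_trans hherm (by nlinarith)
    set t : ℝ := ‖(1:ℂ) - herm z w‖ with htdef
    have ht1 : 1 - ‖z‖ ≤ t := by
      have h := norm_sub_norm_le (1:ℂ) (herm z w)
      rw [norm_one] at h
      calc 1 - ‖z‖ ≤ 1 - ‖herm z w‖ := by linarith
        _ ≤ t := h
    have ht2 : t ≤ 2 := by
      have h := norm_sub_le (1:ℂ) (herm z w)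
      rw [norm_one] at h
      have h2 : ‖herm z w‖ ≤ 1 := by nlinarith
      calc t ≤ 1 + ‖herm z w‖ := h
        _ ≤ 2 := by linarith
    have htpos : 0 < t := lt_of_lt_of_le hz2 ht1
    have hmt : m ≤ t ^ (-c) := by
      rcases le_or_gt (-c) 0 with h | h
      · exact le_trans (min_le_right _ _) (Real.rpow_le_rpow_of_nonpos htpos ht2 h)
      · exact le_trans (min_le_left _ _) (Real.rpow_le_rpow hz2.le ht1 h.le)
    have hA : (0:ℝ) ≤ (1 - ‖z‖ ^ 2) ^ a * (1 - ‖w‖ ^ 2) ^ b :=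
      mul_nonneg (Real.rpow_nonneg hz2'.le a) (Real.rpow_nonneg hw2'.le b)
    have hne : (1 : ℂ) - herm z w ≠ 0 := by
      intro h0
      have ht0 : t = 0 := by rw [htdef, h0, norm_zero]
      exact htpos.ne' ht0
    have hnorm : ‖Tker n a b c z w‖
        = ((1 - ‖z‖ ^ 2) ^ a * (1 - ‖w‖ ^ 2) ^ b) * t ^ (-c) := by
      rw [Tker, norm_mul]
      congr 1
      · rw [Complex.norm_real, Real.norm_eq_abs, _root_.abs_of_nonneg hA]
      · rw [Complex.norm_cpow_of_ne_zero hne]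
        have hre : (-(c:ℂ)).re = -c := by simp
        have him : (-(c:ℂ)).im = 0 := by simp
        rw [hre, him, mul_zero, Real.exp_zero, div_one, htdef]
    refine ENNReal.ofReal_le_ofReal ?_
    rw [hnorm]
    have heq : ε * (1 - ‖w‖ ^ 2) ^ b = ((1 - ‖z‖ ^ 2) ^ a * (1 - ‖w‖ ^ 2) ^ b) * m := by
      rw [hε]; ring
    rw [heq]
    exact mul_le_mul_of_nonneg_left hmt hA
  have hfin : ∫⁻ w in unitBall n, ENNReal.ofReal ‖Tker n a b c z w‖ ∂volume ≠ ∞ := by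
    have h1 : Integrable (fun w => ‖Tker n a b c z w‖) (volume.restrict (unitBall n)) := hzI.norm
    exact (lintegral_ofReal_ne_top_iff_integrable h1.aestronglyMeasurable
      (Filter.Eventually.of_forall fun w => norm_nonneg _)).2 h1
  have hcontra : (∫⁻ w in unitBall n, ENNReal.ofReal ((1 - ‖w‖ ^ 2) ^ b) ∂volume) = ∞ := by
    rw [hBeq]; exact lintegral_weight_eq_top n hn b hb
  have hfinal : (⊤:ℝ≥0∞) ≤ ∫⁻ w in unitBall n, ENNReal.ofReal ‖Tker n a b c z w‖ ∂volume := by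
    calc (⊤:ℝ≥0∞) = ENNReal.ofReal ε *
          ∫⁻ w in unitBall n, ENNReal.ofReal ((1 - ‖w‖ ^ 2) ^ b) ∂volume := by
          rw [hcontra, ENNReal.mul_top (ENNReal.ofReal_pos.2 hεpos).ne']
      _ = ∫⁻ w in unitBall n, ENNReal.ofReal ε * ENNReal.ofReal ((1 - ‖w‖ ^ 2) ^ b) ∂volume :=
          (lintegral_const_mul' _ _ ENNReal.ofReal_ne_top).symm
      _ = ∫⁻ w in unitBall n, ENNReal.ofReal (ε * (1 - ‖w‖ ^ 2) ^ b) ∂volume :=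
          lintegral_congr fun w => (ENNReal.ofReal_mul hεpos.le).symm
      _ ≤ _ := by
          refine lintegral_mono_ae ?_
          filter_upwards [ae_restrict_mem hBmeas] with w hw using hlow w hw
  exact hfin (top_le_iff.1 hfinal)
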